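/- arXiv:2203.12090 — 4 statements merged into one kernel-verified Lean document; each statement's English description precedes it below -/
import Mathlib

section
/- The system dφ/dt = γ, dγ/dt = (1/m)(−γ + ω − k sin φ), dk/dt = α cos φ − k has an equilibrium point if and only if α ≥ 2ω. -/
theorem equilibrium_exists_iff (m α ω : ℝ) (hm : 0 < m) (hα : 0 < α) (hω : 0 ≤ ω) :
    (∃ φ γ k : ℝ,
      γ = 0 ∧ (1 / m) * (-γ + ω - k * Real.sin φ) = 0 ∧ α * Real.cos φ - k = 0) ↔
    α ≥ 2 * ω := by
  constructor
  · rintro ⟨φ, γ, k, h1, h2, h3⟩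
    have hm' : (1:ℝ)/m ≠ 0 := by positivity
    have h2' : -γ + ω - k * Real.sin φ = 0 := by
      rcases mul_eq_zero.mp h2 with h | h
      · exact absurd h hm'
      · exact h
    have hk : k = α * Real.cos φ := by linarith
    have hs : Real.sin (2 * φ) = 2 * Real.sin φ * Real.cos φ := Real.sin_two_mul φ
    have h4 : Real.sin (2 * φ) ≤ 1 := Real.sin_le_one _
    subst h1 hk
    nlinarith
  · intro h
    set θ := Real.arcsin (2 * ω / α) with hθ
    have hle : 2 * ω / α ≤ 1 := by
      rw [div_le_one hα]; linarith
    have hge : 0 ≤ 2 * ω / α := by positivity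
    have hsin : Real.sin θ = 2 * ω / α := Real.sin_arcsin (by linarith) hle
    refine ⟨θ / 2, 0, α * Real.cos (θ / 2), rfl, ?_, by ring⟩
    have hs : Real.sin θ = 2 * Real.sin (θ/2) * Real.cos (θ/2) := by
      have := Real.sin_two_mul (θ/2)
      rw [show 2 * (θ/2) = θ by ring] at this
      exact this
    have : -0 + ω - α * Real.cos (θ / 2) * Real.sin (θ / 2) = 0 := by
      have : α * (2 * Real.sin (θ/2) * Real.cos (θ/2)) = 2 * ω := by
        rw [← hs, hsin]; field_simp
      nlinarith
    rw [this, mul_zero]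
end

section
/- Let (φ(t), γ(t), k(t)) solve dφ/dt = γ, dγ/dt = (1/m)(−γ + ω − k sin φ), dk/dt = α cos φ − k on [0, ∞). Then for every ε > 0 there exists T ≥ 0 such that |γ(t)| ≤ ω + α + ε for all t ≥ T. -/
open Real Set

lemma mono_aux (a : ℝ) (f f' : ℝ → ℝ)
    (hf : ∀ t ∈ Set.Ici a, HasDerivAt f (f' t) t)
    (h0 : ∀ t ∈ Set.Ici a, 0 ≤ f' t) :
    ∀ t ∈ Set.Ici a, f a ≤ f t := by
  intro t ht
  have hcont : ContinuousOn f (Set.Ici a) :=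
    fun x hx => (hf x hx).continuousAt.continuousWithinAt
  have hdiff : DifferentiableOn ℝ f (interior (Set.Ici a)) := by
    rw [interior_Ici]
    exact fun x hx => ((hf x (Set.Ioi_subset_Ici_self hx)).differentiableAt).differentiableWithinAt
  have hmono := monotoneOn_of_deriv_nonneg (convex_Ici a) hcont hdiff (by
    rw [interior_Ici]
    intro x hx
    rw [(hf x (Set.Ioi_subset_Ici_self hx)).deriv]
    exact h0 x (Set.Ioi_subset_Ici_self hx))
  exact hmono (self_mem_Ici) ht ht

theorem gamma_eventually_bounded (m α ω : ℝ) (hm : 0 < m) (hα : 0 < α) (hω : 0 ≤ ω)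
    (φ γ k : ℝ → ℝ)
    (hφ : ∀ t ∈ Set.Ici (0 : ℝ), HasDerivAt φ (γ t) t)
    (hγ : ∀ t ∈ Set.Ici (0 : ℝ),
      HasDerivAt γ ((1 / m) * (-(γ t) + ω - k t * Real.sin (φ t))) t)
    (hk : ∀ t ∈ Set.Ici (0 : ℝ), HasDerivAt k (α * Real.cos (φ t) - k t) t) :
    ∀ ε : ℝ, 0 < ε → ∃ T : ℝ, 0 ≤ T ∧ ∀ t : ℝ, T ≤ t → |γ t| ≤ ω + α + ε := by
  intro ε hε
  set δ : ℝ := ε / 2 with hδdef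
  have hδ : 0 < δ := by positivity
  set Ck : ℝ := |k 0| + α with hCk
  have hCkpos : 0 < Ck := by positivity
  -- bound on k
  have kbound : ∀ t ∈ Set.Ici (0:ℝ), |k t| ≤ α + Ck * Real.exp (-t) := by
    -- upper bound
    have hup : ∀ t ∈ Set.Ici (0:ℝ), k t ≤ α + Ck * Real.exp (-t) := by
      have hF : ∀ t ∈ Set.Ici (0:ℝ),
          HasDerivAt (fun s => α * Real.exp s - Real.exp s * k s)
            (Real.exp t * (α * (1 - Real.cos (φ t)))) t := by
        intro t ht
        have h1 : HasDerivAt (fun s => α * Real.exp s - Real.exp s * k s)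
            (α * Real.exp t - (Real.exp t * k t + Real.exp t * (α * Real.cos (φ t) - k t))) t :=
          ((Real.hasDerivAt_exp t).const_mul α).sub
            ((Real.hasDerivAt_exp t).mul (hk t ht))
        convert h1 using 1; ring
      have hmono := mono_aux 0 _ _ hF (by
        intro t ht
        have h1 : Real.cos (φ t) ≤ 1 := Real.cos_le_one _
        have h2 := Real.exp_pos t
        exact mul_nonneg h2.le (mul_nonneg hα.le (by linarith)))
      intro t ht
      have := hmono t ht
      simp only [Real.exp_zero] at this
      have hE := Real.exp_pos t
      have key : α * Real.exp t - Real.exp t * k t ≥ α - k 0 := by linarith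
      have hk0 : k 0 - α ≤ Ck := by
        have := abs_nonneg (k 0); have := le_abs_self (k 0); simp [hCk]; linarith
      have hexp : Real.exp (-t) * Real.exp t = 1 := by
        rw [← Real.exp_add]; simp
      nlinarith [mul_pos (Real.exp_pos (-t)) hE, Real.exp_pos (-t)]
    have hlo : ∀ t ∈ Set.Ici (0:ℝ), -(α + Ck * Real.exp (-t)) ≤ k t := by
      have hF : ∀ t ∈ Set.Ici (0:ℝ),
          HasDerivAt (fun s => α * Real.exp s + Real.exp s * k s)
            (Real.exp t * (α * (1 + Real.cos (φ t)))) t := by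
        intro t ht
        have h1 : HasDerivAt (fun s => α * Real.exp s + Real.exp s * k s)
            (α * Real.exp t + (Real.exp t * k t + Real.exp t * (α * Real.cos (φ t) - k t))) t :=
          ((Real.hasDerivAt_exp t).const_mul α).add
            ((Real.hasDerivAt_exp t).mul (hk t ht))
        convert h1 using 1; ring
      have hmono := mono_aux 0 _ _ hF (by
        intro t ht
        have h1 : -1 ≤ Real.cos (φ t) := Real.neg_one_le_cos _
        have h2 := Real.exp_pos t
        exact mul_nonneg h2.le (mul_nonneg hα.le (by linarith)))
      intro t ht
      have := hmono t ht
      simp only [Real.exp_zero] at this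
      have hE := Real.exp_pos t
      have hk0 : -(k 0) - α ≤ Ck := by
        have := neg_abs_le (k 0); simp [hCk]; linarith
      have hexp : Real.exp (-t) * Real.exp t = 1 := by
        rw [← Real.exp_add]; simp
      nlinarith [Real.exp_pos (-t)]
    intro t ht
    exact abs_le.2 ⟨hlo t ht, hup t ht⟩
  -- choose T0 so that Ck * exp(-t) ≤ δ for t ≥ T0
  set T0 : ℝ := max 0 (Real.log (Ck / δ)) with hT0
  have hT0nn : (0:ℝ) ≤ T0 := le_max_left _ _
  have hkT0 : ∀ t, T0 ≤ t → |k t| ≤ α + δ := by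
    intro t ht
    have ht0 : (0:ℝ) ≤ t := le_trans hT0nn ht
    have h1 := kbound t ht0
    have h2 : Real.exp (-t) ≤ δ / Ck := by
      have hlog : Real.log (Ck / δ) ≤ t := le_trans (le_max_right _ _) ht
      have : -t ≤ Real.log (δ / Ck) := by
        rw [Real.log_div hδ.ne' hCkpos.ne']
        rw [Real.log_div hCkpos.ne' hδ.ne'] at hlog
        linarith
      calc Real.exp (-t) ≤ Real.exp (Real.log (δ / Ck)) := Real.exp_le_exp.2 this
        _ = δ / Ck := Real.exp_log (by positivity)
    have : Ck * Real.exp (-t) ≤ δ := by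
      calc Ck * Real.exp (-t) ≤ Ck * (δ / Ck) := by
            exact mul_le_mul_of_nonneg_left h2 hCkpos.le
        _ = δ := by field_simp
    linarith
  -- bound on γ on [T0, ∞)
  set M : ℝ := ω + α + δ with hM
  have hMpos : 0 < M := by positivity
  have hforce : ∀ t, T0 ≤ t → |ω - k t * Real.sin (φ t)| ≤ M := by
    intro t ht
    have h1 := hkT0 t ht
    have h2 : |Real.sin (φ t)| ≤ 1 := Real.abs_sin_le_one _
    have h3 : |k t * Real.sin (φ t)| ≤ α + δ := by
      rw [abs_mul]
      calc |k t| * |Real.sin (φ t)| ≤ (α + δ) * 1 := by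
            apply mul_le_mul h1 h2 (abs_nonneg _) (by positivity)
        _ = α + δ := mul_one _
    rw [abs_le]
    rcases abs_le.1 h3 with ⟨ha, hb⟩
    constructor <;> simp [hM] <;> linarith
  -- γ t ≤ M + (γ T0 - M) exp((T0 - t)/m) etc.
  have hγup : ∀ t, T0 ≤ t →
      γ t ≤ M + (γ T0 - M) * Real.exp ((T0 - t) / m) := by
    have hF : ∀ t ∈ Set.Ici T0,
        HasDerivAt (fun s => M * Real.exp (s / m) - Real.exp (s / m) * γ s)
          ((1 / m) * Real.exp (t / m) * (M - (ω - k t * Real.sin (φ t)))) t := by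
      intro t ht
      have ht0 : t ∈ Set.Ici (0:ℝ) := le_trans hT0nn ht
      have hexp : HasDerivAt (fun s : ℝ => Real.exp (s / m)) (Real.exp (t / m) * (1 / m)) t := by
        have := (Real.hasDerivAt_exp (t / m)).comp t
          ((hasDerivAt_id t).div_const m)
        simpa [Function.comp_def] using this
      have h1 : HasDerivAt (fun s => M * Real.exp (s / m) - Real.exp (s / m) * γ s)
          (M * (Real.exp (t / m) * (1 / m)) -
            (Real.exp (t / m) * (1 / m) * γ t +
              Real.exp (t / m) * ((1 / m) * (-(γ t) + ω - k t * Real.sin (φ t))))) t :=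
        (hexp.const_mul M).sub (hexp.mul (hγ t ht0))
      convert h1 using 1; field_simp; ring
    have hmono := mono_aux T0 _ _ hF (by
      intro t ht
      have h1 := hforce t ht
      rcases abs_le.1 h1 with ⟨_, hb⟩
      have h2 := Real.exp_pos (t / m)
      have h3 : 0 < 1 / m := by positivity
      exact mul_nonneg (mul_nonneg h3.le h2.le) (by linarith))
    intro t ht
    have := hmono t ht
    have hE := Real.exp_pos (t / m)
    have hkey : Real.exp (T0 / m) = Real.exp ((T0 - t) / m) * Real.exp (t / m) := by
      rw [← Real.exp_add]; congr 1; field_simp; ring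
    rw [hkey] at this
    have hq := Real.exp_pos ((T0 - t) / m)
    nlinarith
  have hγlo : ∀ t, T0 ≤ t →
      -M + (γ T0 + M) * Real.exp ((T0 - t) / m) ≤ γ t := by
    have hF : ∀ t ∈ Set.Ici T0,
        HasDerivAt (fun s => M * Real.exp (s / m) + Real.exp (s / m) * γ s)
          ((1 / m) * Real.exp (t / m) * (M + (ω - k t * Real.sin (φ t)))) t := by
      intro t ht
      have ht0 : t ∈ Set.Ici (0:ℝ) := le_trans hT0nn ht
      have hexp : HasDerivAt (fun s : ℝ => Real.exp (s / m)) (Real.exp (t / m) * (1 / m)) t := by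
        have := (Real.hasDerivAt_exp (t / m)).comp t
          ((hasDerivAt_id t).div_const m)
        simpa [Function.comp_def] using this
      have h1 : HasDerivAt (fun s => M * Real.exp (s / m) + Real.exp (s / m) * γ s)
          (M * (Real.exp (t / m) * (1 / m)) +
            (Real.exp (t / m) * (1 / m) * γ t +
              Real.exp (t / m) * ((1 / m) * (-(γ t) + ω - k t * Real.sin (φ t))))) t :=
        (hexp.const_mul M).add (hexp.mul (hγ t ht0))
      convert h1 using 1; field_simp; ring
    have hmono := mono_aux T0 _ _ hF (by
      intro t ht
      have h1 := hforce t ht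
      rcases abs_le.1 h1 with ⟨ha, _⟩
      have h2 := Real.exp_pos (t / m)
      have h3 : 0 < 1 / m := by positivity
      exact mul_nonneg (mul_nonneg h3.le h2.le) (by linarith))
    intro t ht
    have := hmono t ht
    have hE := Real.exp_pos (t / m)
    have hkey : Real.exp (T0 / m) = Real.exp ((T0 - t) / m) * Real.exp (t / m) := by
      rw [← Real.exp_add]; congr 1; field_simp; ring
    rw [hkey] at this
    have hq := Real.exp_pos ((T0 - t) / m)
    nlinarith
  -- choose final T
  set C : ℝ := |γ T0| + M with hC
  have hCpos : 0 < C := by positivity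
  refine ⟨T0 + m * max 0 (Real.log (C / δ)), ?_, ?_⟩
  · have : 0 ≤ m * max 0 (Real.log (C / δ)) :=
      mul_nonneg hm.le (le_max_left _ _)
    linarith
  · intro t ht
    have hT0t : T0 ≤ t := by
      have : 0 ≤ m * max 0 (Real.log (C / δ)) :=
        mul_nonneg hm.le (le_max_left _ _)
      linarith
    have hq : Real.exp ((T0 - t) / m) ≤ δ / C := by
      have hlog : m * Real.log (C / δ) ≤ t - T0 := by
        have h1 : Real.log (C / δ) ≤ max 0 (Real.log (C / δ)) := le_max_right _ _
        nlinarith [mul_le_mul_of_nonneg_left h1 hm.le]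
      have h2 : (T0 - t) / m ≤ Real.log (δ / C) := by
        rw [Real.log_div hδ.ne' hCpos.ne']
        rw [div_le_iff₀ hm] -- (T0 - t) ≤ m * (log δ - log C)
        rw [Real.log_div hCpos.ne' hδ.ne'] at hlog
        nlinarith
      calc Real.exp ((T0 - t) / m) ≤ Real.exp (Real.log (δ / C)) := Real.exp_le_exp.2 h2
        _ = δ / C := Real.exp_log (by positivity)
    have hqC : C * Real.exp ((T0 - t) / m) ≤ δ := by
      calc C * Real.exp ((T0 - t) / m) ≤ C * (δ / C) :=
            mul_le_mul_of_nonneg_left hq hCpos.le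
        _ = δ := by field_simp
    have h1 := hγup t hT0t
    have h2 := hγlo t hT0t
    have hq0 := (Real.exp_pos ((T0 - t) / m)).le
    have habs1 : γ T0 - M ≤ C := by
      have := le_abs_self (γ T0); simp [hC]; linarith
    have habs2 : -C ≤ γ T0 + M := by
      have := neg_abs_le (γ T0); simp [hC]; linarith
    rw [abs_le]
    constructor
    · have h4 : -C * Real.exp ((T0 - t) / m) ≤ (γ T0 + M) * Real.exp ((T0 - t) / m) :=
        mul_le_mul_of_nonneg_right habs2 hq0
      have h5 : -C * Real.exp ((T0 - t) / m) = -(C * Real.exp ((T0 - t) / m)) := by ring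
      rw [h5] at h4
      linarith
    · have h4 : (γ T0 - M) * Real.exp ((T0 - t) / m) ≤ C * Real.exp ((T0 - t) / m) :=
        mul_le_mul_of_nonneg_right habs1 hq0
      linarith
end

section
/- Along any solution of the system dφ/dt = γ, dγ/dt = (1/m)(−γ + ω − k sin φ), dk/dt = α cos φ − k, the function E(φ, γ, k) = (α m γ²)/2 − α ω φ − α k cos φ + k²/2 satisfies dE/dt = −(α γ² + (k − α cos φ)²) ≤ 0. -/
theorem energy_nonincreasing (m α ω : ℝ) (hm : 0 < m) (hα : 0 < α)
    (φ γ k : ℝ → ℝ)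
    (hφ : ∀ t, HasDerivAt φ (γ t) t)
    (hγ : ∀ t, HasDerivAt γ ((1 / m) * (-(γ t) + ω - k t * Real.sin (φ t))) t)
    (hk : ∀ t, HasDerivAt k (α * Real.cos (φ t) - k t) t) :
    ∀ t : ℝ,
      HasDerivAt (fun s => (α * m * (γ s) ^ 2) / 2 - α * ω * φ s
          - α * k s * Real.cos (φ s) + (k s) ^ 2 / 2)
        (-(α * (γ t) ^ 2 + (k t - α * Real.cos (φ t)) ^ 2)) t ∧
      -(α * (γ t) ^ 2 + (k t - α * Real.cos (φ t)) ^ 2) ≤ 0 := by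
  intro t
  refine ⟨?_, neg_nonpos.mpr (by positivity)⟩
  have hcos : HasDerivAt (fun s => Real.cos (φ s)) (-Real.sin (φ t) * γ t) t :=
    (Real.hasDerivAt_cos (φ t)).comp t (hφ t)
  have h := ((((((hγ t).pow 2).const_mul (α * m)).div_const 2).sub
      ((hφ t).const_mul (α * ω))).sub
      ((((hk t).const_mul α).mul hcos))).add (((hk t).pow 2).div_const 2)
  convert h using 1
  · rfl
  · rfl
  · rfl
  · field_simp
    ring
end

section
/- Let m > 0 and u ≥ v ≥ 0 with u > v, and let f(x) = 2mx³ + 2(m+1)x² + (u+2)x + (u − v). Then every complex root of f has negative real part. -/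
theorem f_roots_negative_real_part (m u v : ℝ) (hm : 0 < m) (hv : 0 ≤ v) (huv : v < u) :
    ∀ z : ℂ,
      2 * (m : ℂ) * z ^ 3 + 2 * ((m : ℂ) + 1) * z ^ 2 + ((u : ℂ) + 2) * z + ((u : ℂ) - v) = 0 →
      z.re < 0 := by
  intro z hz
  by_contra hcon
  push_neg at hcon
  rw [Complex.ext_iff] at hz
  obtain ⟨hre, him⟩ := hz
  simp only [Complex.add_re, Complex.add_im, Complex.mul_re, Complex.mul_im,
    Complex.sub_re, Complex.sub_im, Complex.ofReal_re, Complex.ofReal_im,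
    Complex.one_re, Complex.one_im, Complex.zero_re, Complex.zero_im, pow_succ, pow_zero,
    one_mul] at hre him
  norm_num at hre him
  ring_nf at hre him
  set s := z.re with hs
  set t := z.im with ht
  have h : 0 ≤ s := hcon
  rcases eq_or_ne t 0 with h0 | h0
  · rw [h0] at hre
    nlinarith [mul_nonneg (mul_nonneg hm.le h) (mul_nonneg h h),
      mul_nonneg hm.le (mul_nonneg h h), mul_nonneg h h,
      mul_nonneg h (le_of_lt (lt_of_le_of_lt hv huv))]
  · have h1 : t * (6 * m * s ^ 2 + 4 * m * s + 4 * s + u + 2 - 2 * m * t ^ 2) = 0 := by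
      linear_combination him
    have hQ : 2 * m * t ^ 2 = 6 * m * s ^ 2 + 4 * m * s + 4 * s + u + 2 := by
      rcases mul_eq_zero.mp h1 with h2 | h2
      · exact absurd h2 h0
      · linarith
    nlinarith [hre, hQ, mul_nonneg h h, mul_nonneg hm.le h, mul_nonneg (mul_nonneg hm.le h) h,
      mul_nonneg h (le_of_lt (lt_of_le_of_lt hv huv)), hm, mul_pos hm hm, sq_nonneg t,
      mul_nonneg hm.le (sq_nonneg t), mul_nonneg h (sq_nonneg t)]
end
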